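/- For all n ≥ 1, the colon ideals satisfy (Jⁿ : x₂²) ⊆ J^{n-1} and (Jⁿ : x₃^{2(q+m)+1}) ⊆ J^{n-2} (where J^{i} denotes the unit ideal for i ≤ 0). -/
import Mathlib


open MvPolynomial

/-- The monomial ideal `J = (x₂², x₂x₃^{q+m}, x₃^{q+m+1})` of `T = k[x₂,x₃]`
(here `X 0 = x₂`, `X 1 = x₃`). -/
noncomputable def Jideal (k : Type*) [Field k] (q m : ℕ) : Ideal (MvPolynomial (Fin 2) k) :=
  Ideal.span {X 0 ^ 2, X 0 * X 1 ^ (q+m), X 1 ^ (q+m+1)}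

/-- The monomial ideal `F = (x₃^{2(q+m)+1})` of `T`. -/
noncomputable def Fideal (k : Type*) [Field k] (q m : ℕ) : Ideal (MvPolynomial (Fin 2) k) :=
  Ideal.span {X 1 ^ (2*(q+m)+1)}

/-- `Iₙ = Σ_{n₁+2n₂=n} F^{n₂} J^{n₁}`. -/
noncomputable def Iideal (k : Type*) [Field k] (q m n : ℕ) : Ideal (MvPolynomial (Fin 2) k) :=
  ⨆ (c : ℕ × ℕ) (_ : c.1 + 2 * c.2 = n), (Fideal k q m) ^ c.2 * (Jideal k q m) ^ c.1

namespace S19aux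

/-- exponent predicate: `s` is the exponent vector of a product of `n` generators of `J`. -/
def Q (a n : ℕ) (s : Fin 2 →₀ ℕ) : Prop :=
  ∃ i j l : ℕ, i + j + l = n ∧ s 0 = 2*i + j ∧ s 1 = a*j + (a+1)*l

lemma finsupp_fin2_eq (s : Fin 2 →₀ ℕ) :
    s = Finsupp.single 0 (s 0) + Finsupp.single 1 (s 1) := by
  ext i
  fin_cases i <;> simp

lemma monom_eq {k : Type*} [Field k] (α β : ℕ) :
    (monomial (Finsupp.single 0 α + Finsupp.single 1 β) (1:k) : MvPolynomial (Fin 2) k)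
      = X 0 ^ α * X 1 ^ β := by
  rw [X_pow_eq_monomial, X_pow_eq_monomial, monomial_mul, one_mul]

lemma J_pow_eq (k : Type*) [Field k] (q m n : ℕ) :
    Jideal k q m ^ n
      = Ideal.span ((fun s => monomial s (1:k)) '' {s | Q (q+m) n s}) := by
  apply le_antisymm
  · -- induction on n
    induction n with
    | zero =>
        rw [pow_zero, Ideal.one_eq_top, top_le_iff, Ideal.eq_top_iff_one]
        apply Ideal.subset_span
        refine ⟨0, ⟨0, 0, 0, by simp, by simp, by simp⟩, ?_⟩
        simp [monomial_zero']
    | succ n ih =>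
        have hJ : Jideal k q m
            ≤ Ideal.span ((fun s => monomial s (1:k)) '' {s | Q (q+m) 1 s}) := by
          rw [Jideal, Ideal.span_le]
          rintro x hx
          simp only [Set.mem_insert_iff, Set.mem_singleton_iff] at hx
          apply Ideal.subset_span
          rcases hx with rfl | rfl | rfl
          · exact ⟨Finsupp.single 0 2, ⟨1, 0, 0, by simp, by simp, by simp⟩,
              X_pow_eq_monomial.symm⟩
          · refine ⟨Finsupp.single 0 1 + Finsupp.single 1 (q+m),
              ⟨0, 1, 0, by simp, by simp, by simp⟩, ?_⟩
            show (monomial (Finsupp.single 0 1 + Finsupp.single 1 (q+m)) (1:k))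
              = X 0 * X 1 ^ (q+m)
            rw [monom_eq, pow_one]
          · exact ⟨Finsupp.single 1 (q+m+1), ⟨0, 0, 1, by simp, by simp, by simp⟩,
              X_pow_eq_monomial.symm⟩
        calc Jideal k q m ^ (n+1) = Jideal k q m ^ n * Jideal k q m := by rw [pow_succ]
          _ ≤ Ideal.span ((fun s => monomial s (1:k)) '' {s | Q (q+m) n s})
              * Ideal.span ((fun s => monomial s (1:k)) '' {s | Q (q+m) 1 s}) :=
            Ideal.mul_mono ih hJ
          _ ≤ Ideal.span ((fun s => monomial s (1:k)) '' {s | Q (q+m) (n+1) s}) := by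
            rw [Ideal.span_mul_span']
            apply Ideal.span_le.2
            rintro x ⟨y, ⟨s, hs, rfl⟩, z, ⟨t, ht, rfl⟩, rfl⟩
            apply Ideal.subset_span
            refine ⟨s + t, ?_, ?_⟩
            · obtain ⟨i, j, l, hsum, h0, h1⟩ := hs
              obtain ⟨i', j', l', hsum', h0', h1'⟩ := ht
              refine ⟨i + i', j + j', l + l', by omega, ?_, ?_⟩
              · simp only [Finsupp.add_apply, h0, h0']; ring
              · simp only [Finsupp.add_apply, h1, h1']; ring
            · show (monomial (s + t) (1:k)) = monomial s (1:k) * monomial t (1:k)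
              rw [monomial_mul, one_mul]
  · apply Ideal.span_le.2
    rintro x ⟨s, ⟨i, j, l, hsum, h0, h1⟩, rfl⟩
    show (monomial s (1:k)) ∈ (Jideal k q m ^ n : Ideal (MvPolynomial (Fin 2) k))
    have hs : (monomial s (1:k)) = ((X 0 ^ 2 : MvPolynomial (Fin 2) k)) ^ i
        * (X 0 * X 1 ^ (q+m)) ^ j * (X 1 ^ (q+m+1)) ^ l := by
      rw [finsupp_fin2_eq s, h0, h1, monom_eq]
      ring
    rw [hs, ← hsum]
    have m1 : (X 0 ^ 2 : MvPolynomial (Fin 2) k) ∈ Jideal k q m :=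
      Ideal.subset_span (by simp)
    have m2 : (X 0 * X 1 ^ (q+m) : MvPolynomial (Fin 2) k) ∈ Jideal k q m :=
      Ideal.subset_span (by simp)
    have m3 : (X 1 ^ (q+m+1) : MvPolynomial (Fin 2) k) ∈ Jideal k q m :=
      Ideal.subset_span (by simp)
    rw [pow_add, pow_add]
    exact Ideal.mul_mem_mul (Ideal.mul_mem_mul (Ideal.pow_mem_pow m1 i)
      (Ideal.pow_mem_pow m2 j)) (Ideal.pow_mem_pow m3 l)

lemma normy (a j l : ℕ) (ha : 1 ≤ a) :
    a*(j % 2) + (a+1)*(l + j/2) ≤ a*j + (a+1)*l := by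
  have hA : a*j = a*(j % 2) + 2*(a*(j/2)) := by
    conv_lhs => rw [show j = j % 2 + 2*(j/2) from by omega]
    ring
  have hB : (a+1)*(l + j/2) = (a+1)*l + (a+1)*(j/2) := by ring
  have hC : (a+1)*(j/2) ≤ (2*a)*(j/2) := Nat.mul_le_mul (by omega) le_rfl
  have hD : (2*a)*(j/2) = 2*(a*(j/2)) := by ring
  linarith

lemma key1 (a n α β i j l : ℕ) (ha : 1 ≤ a) (hn : 1 ≤ n)
    (hsum : i + j + l = n) (hx : 2*i + j ≤ α + 2) (hy : a*j + (a+1)*l ≤ β) :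
    ∃ i' j' l', i' + j' + l' = n - 1 ∧ 2*i' + j' ≤ α ∧ a*j' + (a+1)*l' ≤ β := by
  have hy0 : a*(j % 2) + (a+1)*(l + j/2) ≤ β := le_trans (normy a j l ha) hy
  rcases Nat.eq_zero_or_pos (i + j/2) with h0 | h0
  · -- i = 0, j ≤ 1
    refine ⟨0, 0, n - 1, by omega, by omega, ?_⟩
    have h5 : (a+1)*l ≤ β := le_trans (Nat.le_add_left _ _) hy
    have h6 : n - 1 ≤ l := by omega
    have h7 : (a+1)*(n-1) ≤ (a+1)*l := Nat.mul_le_mul le_rfl h6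
    calc a*0 + (a+1)*(n-1) = (a+1)*(n-1) := by ring
      _ ≤ (a+1)*l := h7
      _ ≤ β := h5
  · exact ⟨i + j/2 - 1, j % 2, l + j/2, by omega, by omega, hy0⟩

lemma key2 (a n α β i j l : ℕ) (ha : 1 ≤ a) (hn : 3 ≤ n)
    (hsum : i + j + l = n) (hx : 2*i + j ≤ α) (hy : a*j + (a+1)*l ≤ β + (2*a+1)) :
    ∃ i' j' l', i' + j' + l' = n - 2 ∧ 2*i' + j' ≤ α ∧ a*j' + (a+1)*l' ≤ β := by
  have hy0 : a*(j % 2) + (a+1)*(l + j/2) ≤ β + (2*a+1) :=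
    le_trans (normy a j l ha) hy
  rcases le_or_gt 2 (l + j/2) with h2 | h2
  · obtain ⟨l1, hl1⟩ : ∃ l1, l + j/2 = l1 + 2 := ⟨l + j/2 - 2, by omega⟩
    refine ⟨i + j/2, j % 2, l1, by omega, by omega, ?_⟩
    rw [hl1] at hy0
    have hexp : (a+1)*(l1+2) = (a+1)*l1 + (2*a+2) := by ring
    linarith
  · refine ⟨n - 2, 0, 0, by omega, by omega, by simp⟩

end S19aux

open S19aux in
/-- For all `n ≥ 1`, `(Jⁿ : x₂²) ⊆ J^{n-1}` and
`(Jⁿ : x₃^{2(q+m)+1}) ⊆ J^{n-2}` (with `J⁰ = T` the unit ideal, via truncated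
subtraction so that `J^{n-2}` is the unit ideal for `n ≤ 2`). -/
theorem statement19 (k : Type*) [Field k] (q m : ℕ) (hq : 1 ≤ q) (hm : 1 ≤ m) :
    ∀ n : ℕ, 1 ≤ n →
      Submodule.colon ((Jideal k q m) ^ n)
          (Ideal.span {(X 0 : MvPolynomial (Fin 2) k) ^ 2})
        ≤ (Jideal k q m) ^ (n-1) ∧
      Submodule.colon ((Jideal k q m) ^ n)
          (Ideal.span {(X 1 : MvPolynomial (Fin 2) k) ^ (2*(q+m)+1)})
        ≤ (Jideal k q m) ^ (n-2) := by
  intro n hn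
  have ha1 : 1 ≤ q + m := by omega
  constructor
  · intro f hf
    have h2 : f * (X 0 : MvPolynomial (Fin 2) k) ^ 2 ∈ Jideal k q m ^ n :=
      Ideal.mem_colon_span_singleton.1 hf
    rw [J_pow_eq, mem_ideal_span_monomial_image] at h2
    rw [J_pow_eq, mem_ideal_span_monomial_image]
    intro d hd
    have hd2 : d + Finsupp.single 0 2 ∈ (f * (X 0 : MvPolynomial (Fin 2) k) ^ 2).support := by
      rw [mem_support_iff, X_pow_eq_monomial, coeff_mul_monomial, mul_one]
      exact mem_support_iff.1 hd
    obtain ⟨s, ⟨i, j, l, hsum, h0, h1⟩, hle⟩ := h2 _ hd2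
    have hle0 : s 0 ≤ d 0 + 2 := by
      have := Finsupp.le_def.1 hle 0
      simpa using this
    have hle1 : s 1 ≤ d 1 := by
      have := Finsupp.le_def.1 hle 1
      simpa using this
    obtain ⟨i', j', l', hsum', hx', hy'⟩ :=
      key1 (q+m) n (d 0) (d 1) i j l ha1 hn hsum (h0 ▸ hle0) (h1 ▸ hle1)
    refine ⟨Finsupp.single 0 (2*i' + j') + Finsupp.single 1 ((q+m)*j' + (q+m+1)*l'),
      ⟨i', j', l', hsum', by simp, by simp⟩, ?_⟩
    rw [Finsupp.le_def]
    intro x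
    fin_cases x <;> simpa using (by assumption : _)
  · intro f hf
    rcases le_or_gt n 2 with hn2 | hn2
    · have h0 : n - 2 = 0 := by omega
      rw [h0, pow_zero, Ideal.one_eq_top]
      exact Submodule.mem_top
    · have h2 : f * (X 1 : MvPolynomial (Fin 2) k) ^ (2*(q+m)+1) ∈ Jideal k q m ^ n :=
        Ideal.mem_colon_span_singleton.1 hf
      rw [J_pow_eq, mem_ideal_span_monomial_image] at h2
      rw [J_pow_eq, mem_ideal_span_monomial_image]
      intro d hd
      have hd2 : d + Finsupp.single 1 (2*(q+m)+1)
          ∈ (f * (X 1 : MvPolynomial (Fin 2) k) ^ (2*(q+m)+1)).support := by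
        rw [mem_support_iff, X_pow_eq_monomial, coeff_mul_monomial, mul_one]
        exact mem_support_iff.1 hd
      obtain ⟨s, ⟨i, j, l, hsum, h0, h1⟩, hle⟩ := h2 _ hd2
      have hle0 : s 0 ≤ d 0 := by
        have := Finsupp.le_def.1 hle 0
        simpa using this
      have hle1 : s 1 ≤ d 1 + (2*(q+m)+1) := by
        have := Finsupp.le_def.1 hle 1
        simpa using this
      obtain ⟨i', j', l', hsum', hx', hy'⟩ :=
        key2 (q+m) n (d 0) (d 1) i j l ha1 (by omega) hsum (h0 ▸ hle0) (h1 ▸ hle1)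
      refine ⟨Finsupp.single 0 (2*i' + j') + Finsupp.single 1 ((q+m)*j' + (q+m+1)*l'),
        ⟨i', j', l', hsum', by simp, by simp⟩, ?_⟩
      rw [Finsupp.le_def]
      intro x
      fin_cases x <;> simpa using (by assumption : _)
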